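/- arXiv:math/9912074 — 2 statements merged into one kernel-verified Lean document; each statement's English description precedes it below -/
import Mathlib

section
/- Let G be a finite group with subgroups I ≤ K ≤ G. Define the averaging map π sending a bi-I-invariant function f : G → ℚ to π(f)(g) = (1/|I|)·∑_{x∈K} f(xg). If f lies in the center of the Hecke algebra H(G,I) (i.e., f⋆h = h⋆f for all bi-I-invariant h, where (f⋆h)(x) = (1/|I|)∑_y f(y)h(y⁻¹x)), then π(f) is bi-K-invariant. -/
open scoped BigOperators

/-- A function `f : G → ℚ` is bi-`K`-invariant if `f (k₁ * g * k₂) = f g` for all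
`k₁, k₂ ∈ K`. -/
def BiInvariant {G : Type*} [Group G] (K : Subgroup G) (f : G → ℚ) : Prop :=
  ∀ k₁ ∈ K, ∀ k₂ ∈ K, ∀ g : G, f (k₁ * g * k₂) = f g

/-- Convolution with Haar measure normalized so that `I` has measure `1`. -/
noncomputable def hconv {G : Type*} [Group G] [Fintype G] (I : Subgroup G) (f g : G → ℚ) :
    G → ℚ :=
  fun x => (Nat.card I : ℚ)⁻¹ * ∑ y : G, f y * g (y⁻¹ * x)

/-- The averaging map `π(f)(g) = (1/|I|) ∑_{x ∈ K} f(x·g)`. -/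
noncomputable def avgMap {G : Type*} [Group G] (I K : Subgroup G) [Fintype K] (f : G → ℚ) :
    G → ℚ :=
  fun g => (Nat.card I : ℚ)⁻¹ * ∑ x : K, f ((x : G) * g)

/-- Let `I ≤ K ≤ G` be subgroups of a finite group `G`.  If `f` is bi-`I`-invariant and lies
in the center of the Hecke algebra `H(G,I)`, then the averaged function `π(f)` is
bi-`K`-invariant. -/
theorem stmt8 (G : Type*) [Group G] [Fintype G] (I K : Subgroup G) [Fintype K] (hIK : I ≤ K)
    (f : G → ℚ) (hf : BiInvariant I f)
    (hcentral : ∀ h : G → ℚ, BiInvariant I h → hconv I f h = hconv I h f) :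
    BiInvariant K (avgMap I K f) := by
  classical
  -- the indicator function of K
  set h : G → ℚ := fun g => if g ∈ K then 1 else 0 with hh_def
  have hK : BiInvariant I h := by
    intro k₁ hk₁ k₂ hk₂ g
    simp [hh_def, mul_mem_cancel_right (hIK hk₂), mul_mem_cancel_left (hIK hk₁)]
  have hne : (Nat.card I : ℚ) ≠ 0 := by
    have : 0 < Nat.card I := Nat.card_pos
    exact_mod_cast this.ne'
  have sumK : ∀ φ : G → ℚ, (∑ z : G, if z ∈ K then φ z else 0) = ∑ z : K, φ z := by
    intro φ
    rw [← Finset.sum_filter]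
    exact Finset.sum_subtype _ (by simp) φ
  have key : ∀ x : G, (∑ k : K, f ((k : G) * x)) = ∑ k : K, f (x * (k : G)) := by
    intro x
    have hc := congrFun (hcentral h hK) x
    simp only [hconv] at hc
    have h1 : (∑ y : G, f y * h (y⁻¹ * x)) = ∑ k : K, f (x * (k : G)) := by
      rw [← Equiv.sum_comp (Equiv.mulLeft x) (fun y => f y * h (y⁻¹ * x))]
      have e : ∀ z : G, f (Equiv.mulLeft x z) * h ((Equiv.mulLeft x z)⁻¹ * x)
          = if z ∈ K then f (x * z) else 0 := by
        intro z
        have : ((x * z)⁻¹ * x) = z⁻¹ := by group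
        simp [Equiv.coe_mulLeft, this, hh_def, inv_mem_iff, mul_ite]
      rw [Finset.sum_congr rfl (fun z _ => e z), sumK]
    have h2 : (∑ y : G, h y * f (y⁻¹ * x)) = ∑ k : K, f ((k : G) * x) := by
      have e : ∀ y : G, h y * f (y⁻¹ * x) = if y ∈ K then f (y⁻¹ * x) else 0 := by
        intro y
        simp [hh_def, ite_mul]
      rw [Finset.sum_congr rfl (fun y _ => e y), sumK (fun y => f (y⁻¹ * x))]
      rw [← Equiv.sum_comp (Equiv.inv K) (fun k : K => f (((k : G))⁻¹ * x))]
      apply Finset.sum_congr rfl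
      intro k _
      simp
    rw [h1, h2] at hc
    exact (mul_left_cancel₀ (inv_ne_zero hne) hc).symm
  intro k₁ hk₁ k₂ hk₂ g
  simp only [avgMap]
  congr 1
  calc (∑ x : K, f ((x : G) * (k₁ * g * k₂)))
      = ∑ x : K, f (((x * (⟨k₁, hk₁⟩ : K) : K) : G) * (g * k₂)) := by
        apply Finset.sum_congr rfl
        intro x _
        congr 1
        push_cast
        group
    _ = ∑ x : K, f ((x : G) * (g * k₂)) :=
        Equiv.sum_comp (Equiv.mulRight (⟨k₁, hk₁⟩ : K))
          (fun x : K => f ((x : G) * (g * k₂)))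
    _ = ∑ x : K, f ((g * k₂) * (x : G)) := (key (g * k₂)).symm ▸ rfl
    _ = ∑ x : K, f (g * (((⟨k₂, hk₂⟩ : K) * x : K) : G)) := by
        apply Finset.sum_congr rfl
        intro x _
        congr 1
        push_cast
        group
    _ = ∑ x : K, f (g * (x : G)) :=
        Equiv.sum_comp (Equiv.mulLeft (⟨k₂, hk₂⟩ : K))
          (fun x : K => f (g * (x : G)))
    _ = ∑ x : K, f ((x : G) * g) := (key g).symm ▸ rfl
end

section
/- Let V be a finite-dimensional vector space over an algebraically closed field of characteristic zero, and let g, h be invertible linear endomorphisms of V such that h∘g∘h⁻¹ = g^q for some integer q ≥ 2. Then every eigenvalue of g is a root of unity. -/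
/-- Grothendieck's quasi-unipotence lemma: if `g, h` are invertible endomorphisms of a
finite-dimensional vector space over an algebraically closed field of characteristic zero
with `h g h⁻¹ = g^q` for some `q ≥ 2`, then every eigenvalue of `g` is a root of unity. -/
theorem stmt10 (F : Type*) [Field F] [IsAlgClosed F] [CharZero F]
    (V : Type*) [AddCommGroup V] [Module F V] [FiniteDimensional F V]
    (g h : V ≃ₗ[F] V) (q : ℕ) (hq : 2 ≤ q) (hconj : h * g * h⁻¹ = g ^ q) :
    ∀ μ : F, Module.End.HasEigenvalue (g : Module.End F V) μ →
      ∃ n : ℕ, 0 < n ∧ μ ^ n = 1 := by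
  intro μ hμ
  set E : Module.End F V := (g : Module.End F V) with hE
  -- key commutation: g ∘ h⁻¹ = h⁻¹ ∘ g^q
  have hcomm : ∀ x : V, g (h⁻¹ x) = h⁻¹ ((g ^ q) x) := by
    intro x
    have h1 : h (g (h⁻¹ x)) = (g ^ q) x := by rw [← hconj]; rfl
    refine h.injective ?_
    rw [h1]
    show _ = (h * h⁻¹) ((g ^ q) x)
    rw [mul_inv_cancel]
    rfl
  -- coercion of g^q
  have hpow : ∀ x : V, ((g ^ q : V ≃ₗ[F] V) : V → V) x = (E ^ q) x := by
    intro x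
    rw [LinearEquiv.pow_apply, Module.End.pow_apply]
    rfl
  -- step: eigenvalue μ ⇒ eigenvalue μ^q
  have step : ∀ ν : F, Module.End.HasEigenvalue E ν →
      Module.End.HasEigenvalue E (ν ^ q) := by
    intro ν hν
    have hq' : (E ^ q).HasEigenvalue (ν ^ q) := hν.pow q
    obtain ⟨v, hv⟩ := hq'.exists_hasEigenvector
    have hv2 : (E ^ q) v = ν ^ q • v := hv.apply_eq_smul
    refine Module.End.hasEigenvalue_of_hasEigenvector
      (x := h⁻¹ v) ⟨Module.End.mem_eigenspace_iff.mpr ?_, ?_⟩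
    · show E (h⁻¹ v) = ν ^ q • (h⁻¹ v)
      have heq : E (h⁻¹ v) = g (h⁻¹ v) := rfl
      rw [heq, hcomm, hpow, hv2, map_smul]
    · simp only [ne_eq, LinearEquiv.map_eq_zero_iff]
      exact fun hz => hv.right (by simpa using congrArg h hz)
  -- iterate: μ^(q^k) is an eigenvalue for all k
  have iter : ∀ k : ℕ, Module.End.HasEigenvalue E (μ ^ q ^ k) := by
    intro k
    induction k with
    | zero => simpa using hμ
    | succ n ih =>
        have := step _ ih
        rwa [← pow_mul, ← pow_succ] at this
  -- μ ≠ 0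
  have hμ0 : μ ≠ 0 := by
    intro h0
    obtain ⟨v, hv⟩ := hμ.exists_hasEigenvector
    have : E v = μ • v := hv.apply_eq_smul
    rw [h0, zero_smul] at this
    have : g v = 0 := this
    exact hv.right (by simpa using congrArg (⇑g.symm) this)
  -- pigeonhole on the finite set of eigenvalues
  have hfin : Set.Finite (Module.End.HasEigenvalue E) := E.finite_hasEigenvalue
  haveI : Finite {x : F | Module.End.HasEigenvalue E x} := hfin.to_subtype
  obtain ⟨i, j, hne, hval⟩ := Finite.exists_ne_map_eq_of_infinite
    (fun k : ℕ => (⟨μ ^ q ^ k, iter k⟩ : {x : F | Module.End.HasEigenvalue E x}))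
  have hij : μ ^ q ^ i = μ ^ q ^ j := congrArg Subtype.val hval
  clear hval
  -- WLOG i < j
  wlog hlt : i < j generalizing i j
  · exact this j i hne.symm hij.symm (by omega)
  have hqlt : q ^ i < q ^ j := Nat.pow_lt_pow_right (by omega) hlt
  refine ⟨q ^ j - q ^ i, by omega, ?_⟩
  have key : μ ^ q ^ i * μ ^ (q ^ j - q ^ i) = μ ^ q ^ i * 1 := by
    rw [mul_one, ← pow_add]
    rw [Nat.add_sub_cancel' hqlt.le]
    exact hij.symm
  exact mul_left_cancel₀ (pow_ne_zero _ hμ0) key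
end
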